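/- Let s ∈ ℝ and let a, b ∈ ℝ with a ≤ s < b. Then |g_s(b) − g_s(a) − (a·g_s(a) + 1 − Φ(s))·(b − a) + (b − s)| ≤ 2·(√(2π)/4 + |a| + (b − a))·(b − a)². -/

import Mathlib

open MeasureTheory

noncomputable def Phi (s : ℝ) : ℝ :=
  ((ProbabilityTheory.gaussianReal 0 1) (Set.Iic s)).toReal

noncomputable def steinG (s w : ℝ) : ℝ :=
  Real.exp (w ^ 2 / 2) *
    ∫ u in Set.Iic w, ((if u ≤ s then (1 : ℝ) else 0) - Phi s) * Real.exp (-u ^ 2 / 2)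

namespace SteinAux

open Real Set Filter

noncomputable def gint (w : ℝ) : ℝ := ∫ u in Set.Iic w, Real.exp (-u ^ 2 / 2)
noncomputable def gintJ (w : ℝ) : ℝ := ∫ u in Set.Ici w, Real.exp (-u ^ 2 / 2)

lemma integrable_gauss : Integrable (fun u : ℝ => Real.exp (-u ^ 2 / 2)) := by
  have h := integrable_exp_neg_mul_sq (b := (1/2 : ℝ)) (by norm_num)
  convert h using 2 with u
  ring_nf

lemma cont_gauss : Continuous (fun u : ℝ => Real.exp (-u ^ 2 / 2)) := by
  fun_prop

lemma gauss_total : ∫ u : ℝ, Real.exp (-u ^ 2 / 2) = Real.sqrt (2 * Real.pi) := by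
  have h := integral_gaussian (1/2 : ℝ)
  have h2 : Real.pi / (1/2 : ℝ) = 2 * Real.pi := by ring
  rw [h2] at h
  rw [← h]
  congr 1 with u
  congr 1
  ring

lemma gint_nonneg (w : ℝ) : 0 ≤ gint w :=
  setIntegral_nonneg measurableSet_Iic fun u _ => (Real.exp_pos _).le

lemma gintJ_nonneg (w : ℝ) : 0 ≤ gintJ w :=
  setIntegral_nonneg measurableSet_Ici fun u _ => (Real.exp_pos _).le

lemma gint_add_gintJ (w : ℝ) : gint w + gintJ w = Real.sqrt (2 * Real.pi) := by
  rw [gint, gintJ, integral_Ici_eq_integral_Ioi,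
    intervalIntegral.integral_Iic_add_Ioi integrable_gauss.integrableOn integrable_gauss.integrableOn, gauss_total]

lemma sqrt_two_pi_pos : 0 < Real.sqrt (2 * Real.pi) := Real.sqrt_pos.2 (by positivity)

lemma gint_mono : Monotone gint := fun x y hxy =>
  setIntegral_mono_set integrable_gauss.integrableOn
    (ae_of_all _ fun u => (Real.exp_pos _).le) ((Set.Iic_subset_Iic.mpr hxy).eventuallyLE)

lemma gint_le (w : ℝ) : gint w ≤ Real.sqrt (2 * Real.pi) := by
  have := gint_add_gintJ w
  have := gintJ_nonneg w
  linarith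

lemma gintJ_anti {x y : ℝ} (h : x ≤ y) : gintJ y ≤ gintJ x := by
  have h1 := gint_add_gintJ x
  have h2 := gint_add_gintJ y
  have := gint_mono h
  linarith

lemma hasDerivAt_gint (w : ℝ) : HasDerivAt gint (Real.exp (-w ^ 2 / 2)) w := by
  have hfun : gint = fun x => gint 0 + ∫ u in (0:ℝ)..x, Real.exp (-u ^ 2 / 2) := by
    funext x
    have h := intervalIntegral.integral_Iic_sub_Iic (μ := volume) (a := (0:ℝ)) (b := x)
      integrable_gauss.integrableOn integrable_gauss.integrableOn
    rw [gint, gint] at *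
    linarith
  rw [hfun]
  have h : HasDerivAt (fun x => ∫ u in (0:ℝ)..x, Real.exp (-u ^ 2 / 2))
      (Real.exp (-w ^ 2 / 2)) w :=
    intervalIntegral.integral_hasDerivAt_right (integrable_gauss.intervalIntegrable)
      (cont_gauss.stronglyMeasurableAtFilter _ _) cont_gauss.continuousAt
  simpa using h.const_add (gint 0)

lemma cont_gint : Continuous gint :=
  continuous_iff_continuousAt.2 fun w => (hasDerivAt_gint w).continuousAt

lemma gintJ_eq_gint_neg (w : ℝ) : gintJ w = gint (-w) := by
  have h := integral_comp_neg_Iic (-w) (fun u : ℝ => Real.exp (-u ^ 2 / 2))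
  simp only [neg_sq, neg_neg] at h
  rw [gintJ, gint, integral_Ici_eq_integral_Ioi, ← h]

lemma gint_zero : gint 0 = Real.sqrt (2 * Real.pi) / 2 := by
  have h1 := gint_add_gintJ 0
  have h2 : gintJ 0 = gint 0 := by rw [gintJ_eq_gint_neg, neg_zero]
  linarith


lemma integrable_mul_gauss : Integrable (fun u : ℝ => -u * Real.exp (-u ^ 2 / 2)) := by
  have h := (integrable_mul_exp_neg_mul_sq (b := (1/2 : ℝ)) (by norm_num)).neg
  apply h.congr (ae_of_all _ fun u => ?_)
  show -(u * Real.exp (-(1/2 : ℝ) * u ^ 2)) = -u * Real.exp (-u ^ 2 / 2)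
  rw [show -(1/2 : ℝ) * u ^ 2 = -u ^ 2 / 2 by ring]
  ring

lemma tendsto_gauss_atBot :
    Tendsto (fun u : ℝ => Real.exp (-u ^ 2 / 2)) atBot (nhds 0) := by
  apply Real.tendsto_exp_atBot.comp
  apply tendsto_atBot_mono' atBot ?_ tendsto_id
  filter_upwards [eventually_le_atBot (-2:ℝ)] with u hu
  show -u ^ 2 / 2 ≤ id u
  simp only [id]
  nlinarith [sq_nonneg (u + 2)]

lemma hasDerivAt_gauss (x : ℝ) :
    HasDerivAt (fun u : ℝ => Real.exp (-u ^ 2 / 2)) (-x * Real.exp (-x ^ 2 / 2)) x := by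
  have h0 : HasDerivAt (fun u : ℝ => u ^ 2) (2 * x) x := by simpa using hasDerivAt_pow 2 x
  have h1 : HasDerivAt (fun u : ℝ => -u ^ 2 / 2) (-x) x := by
    have := (h0.neg).div_const 2
    exact this.congr_deriv (by ring)
  have := h1.exp
  exact this.congr_deriv (by ring)

lemma integral_neg_mul_gauss (w : ℝ) :
    ∫ u in Set.Iic w, -u * Real.exp (-u ^ 2 / 2) = Real.exp (-w ^ 2 / 2) := by
  have h := integral_Iic_of_hasDerivAt_of_tendsto' (a := w)
    (fun x _ => hasDerivAt_gauss x) integrable_mul_gauss.integrableOn tendsto_gauss_atBot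
  rw [h, sub_zero]

lemma gint_mul_le {w : ℝ} (hw : w ≤ 0) : -w * gint w ≤ Real.exp (-w ^ 2 / 2) := by
  rw [← integral_neg_mul_gauss w, gint, ← integral_const_mul]
  apply setIntegral_mono_on ((integrable_gauss.const_mul _).integrableOn)
    integrable_mul_gauss.integrableOn measurableSet_Iic
  intro u hu
  have hu' : u ≤ w := hu
  have : (0:ℝ) ≤ Real.exp (-u ^ 2 / 2) := (Real.exp_pos _).le
  nlinarith

lemma shift_Iic (w : ℝ) :
    ∫ u in Set.Iic w, Real.exp (-(u - w) ^ 2 / 2) = gint 0 := by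
  have h := integral_add_right_eq_self (μ := volume)
    (Set.indicator (Set.Iic w) fun u => Real.exp (-(u - w) ^ 2 / 2)) w
  rw [← integral_indicator measurableSet_Iic, ← h, gint, ← integral_indicator measurableSet_Iic]
  congr 1 with x
  by_cases hx : x ≤ 0
  · rw [Set.indicator_of_mem (by simpa using hx : x + w ∈ Set.Iic w),
      Set.indicator_of_mem (by simpa using hx : x ∈ Set.Iic (0:ℝ))]
    norm_num
  · rw [Set.indicator_of_notMem (by simpa using hx), Set.indicator_of_notMem (by simpa using hx)]

lemma gint_le_half {w : ℝ} (hw : w ≤ 0) :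
    gint w ≤ Real.exp (-w ^ 2 / 2) * (Real.sqrt (2 * Real.pi) / 2) := by
  have key : gint w ≤ ∫ u in Set.Iic w, Real.exp (-w ^ 2 / 2) * Real.exp (-(u - w) ^ 2 / 2) := by
    rw [gint]
    apply setIntegral_mono_on integrable_gauss.integrableOn
      (((integrable_gauss.comp_sub_right w).const_mul _).integrableOn) measurableSet_Iic
    intro u hu
    have hu' : u ≤ w := hu
    rw [← Real.exp_add, Real.exp_le_exp]
    nlinarith [mul_nonneg (neg_nonneg.2 hw) (neg_nonneg.2 (sub_nonpos.2 hu'))]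
  rw [integral_const_mul, shift_Iic, gint_zero] at key
  exact key

lemma exp_mul_exp_neg (w : ℝ) : Real.exp (w ^ 2 / 2) * Real.exp (-w ^ 2 / 2) = 1 := by
  rw [← Real.exp_add, show w ^ 2 / 2 + -w ^ 2 / 2 = 0 by ring, Real.exp_zero]

lemma P_half {w : ℝ} (hw : w ≤ 0) :
    Real.exp (w ^ 2 / 2) * gint w ≤ Real.sqrt (2 * Real.pi) / 2 := by
  have h := mul_le_mul_of_nonneg_left (gint_le_half hw) (Real.exp_nonneg (w ^ 2 / 2))
  rw [← mul_assoc, exp_mul_exp_neg, one_mul] at h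
  exact h

lemma P_mul {w : ℝ} (hw : w ≤ 0) : -w * (Real.exp (w ^ 2 / 2) * gint w) ≤ 1 := by
  have h := mul_le_mul_of_nonneg_left (gint_mul_le hw) (Real.exp_nonneg (w ^ 2 / 2))
  rw [exp_mul_exp_neg] at h
  calc -w * (Real.exp (w ^ 2 / 2) * gint w)
      = Real.exp (w ^ 2 / 2) * (-w * gint w) := by ring
    _ ≤ 1 := h

lemma Q_half {w : ℝ} (hw : 0 ≤ w) :
    Real.exp (w ^ 2 / 2) * gintJ w ≤ Real.sqrt (2 * Real.pi) / 2 := by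
  have h := P_half (w := -w) (neg_nonpos.2 hw)
  rw [neg_sq] at h
  rwa [gintJ_eq_gint_neg]

lemma Q_mul {w : ℝ} (hw : 0 ≤ w) : w * (Real.exp (w ^ 2 / 2) * gintJ w) ≤ 1 := by
  have h := P_mul (w := -w) (neg_nonpos.2 hw)
  rw [neg_sq, neg_neg] at h
  rwa [gintJ_eq_gint_neg]


lemma Phi_eq (s : ℝ) : Phi s = gint s / Real.sqrt (2 * Real.pi) := by
  rw [Phi, ProbabilityTheory.gaussianReal_apply_eq_integral 0 one_ne_zero, ENNReal.toReal_ofReal]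
  · rw [ProbabilityTheory.gaussianPDFReal_def]
    simp only [NNReal.coe_one, mul_one, sub_zero]
    rw [integral_const_mul, gint, div_eq_inv_mul]
  · exact setIntegral_nonneg measurableSet_Iic fun x _ =>
      ProbabilityTheory.gaussianPDFReal_nonneg 0 1 x

lemma Phi_sqrt (s : ℝ) : Phi s * Real.sqrt (2 * Real.pi) = gint s := by
  rw [Phi_eq]
  field_simp

lemma one_sub_Phi_sqrt (s : ℝ) : (1 - Phi s) * Real.sqrt (2 * Real.pi) = gintJ s := by
  have h1 := Phi_sqrt s
  have h2 := gint_add_gintJ s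
  nlinarith

lemma Phi_nonneg (s : ℝ) : 0 ≤ Phi s := by
  rw [Phi_eq]
  exact div_nonneg (gint_nonneg s) sqrt_two_pi_pos.le

lemma Phi_le_one (s : ℝ) : Phi s ≤ 1 := by
  rw [Phi_eq, div_le_one sqrt_two_pi_pos]
  exact gint_le s

noncomputable def gm (s : ℝ) : ℝ → ℝ := fun w => (1 - Phi s) * (Real.exp (w ^ 2 / 2) * gint w)

noncomputable def gp (s : ℝ) : ℝ → ℝ := fun w => Phi s * (Real.exp (w ^ 2 / 2) * gintJ w)

lemma steinG_eq_left {s w : ℝ} (hw : w ≤ s) : steinG s w = gm s w := by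
  rw [steinG, gm]
  rw [setIntegral_congr_fun (g := fun u => (1 - Phi s) * Real.exp (-u ^ 2 / 2))
    measurableSet_Iic (fun u hu => by rw [if_pos (le_trans (Set.mem_Iic.1 hu) hw)]),
    integral_const_mul]
  rw [← gint]
  ring

lemma integrable_steinG_integrand (s : ℝ) :
    Integrable (fun u : ℝ => ((if u ≤ s then (1 : ℝ) else 0) - Phi s) * Real.exp (-u ^ 2 / 2)) := by
  have h := (integrable_gauss.indicator measurableSet_Iic (s := Set.Iic s)).sub
    (integrable_gauss.const_mul (Phi s))
  apply h.congr (ae_of_all _ fun u => ?_)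
  by_cases hu : u ≤ s
  · simp [Set.indicator_of_mem (Set.mem_Iic.2 hu), hu]
    ring
  · simp [Set.indicator_of_notMem (fun h' => hu (Set.mem_Iic.1 h')), hu]

lemma steinG_eq_right {s w : ℝ} (hw : s ≤ w) : steinG s w = gp s w := by
  have hkey : (∫ u in Set.Iic w, ((if u ≤ s then (1 : ℝ) else 0) - Phi s) * Real.exp (-u ^ 2 / 2))
      = Phi s * gintJ w := by
    have hsplit := intervalIntegral.integral_Iic_sub_Iic (μ := volume) (a := s) (b := w)
      (integrable_steinG_integrand s).integrableOn (integrable_steinG_integrand s).integrableOn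
    have hleft : (∫ u in Set.Iic s, ((if u ≤ s then (1 : ℝ) else 0) - Phi s) * Real.exp (-u ^ 2 / 2))
        = (1 - Phi s) * gint s := by
      rw [setIntegral_congr_fun (g := fun u => (1 - Phi s) * Real.exp (-u ^ 2 / 2))
        measurableSet_Iic (fun u hu => by rw [if_pos (Set.mem_Iic.1 hu)]), integral_const_mul, gint]
    have hmid : (∫ u in s..w, ((if u ≤ s then (1 : ℝ) else 0) - Phi s) * Real.exp (-u ^ 2 / 2))
        = -Phi s * (gint w - gint s) := by
      rw [intervalIntegral.integral_of_le hw]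
      rw [setIntegral_congr_fun (g := fun u => -Phi s * Real.exp (-u ^ 2 / 2))
        measurableSet_Ioc (fun u hu => by rw [if_neg (not_le.2 hu.1)]; ring), integral_const_mul]
      congr 1
      rw [← intervalIntegral.integral_of_le hw,
        ← intervalIntegral.integral_Iic_sub_Iic (μ := volume)
          integrable_gauss.integrableOn integrable_gauss.integrableOn, gint, gint]
    have hPhi := Phi_sqrt s
    have hJ := gint_add_gintJ w
    linear_combination hsplit + hleft + hmid - hPhi - Phi s * hJ
  rw [steinG, hkey, gp]
  ring

lemma gm_eq_gp_at (s : ℝ) : gm s s = gp s s := by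
  rw [← steinG_eq_left le_rfl, steinG_eq_right le_rfl]


lemma hasDerivAt_E (w : ℝ) :
    HasDerivAt (fun x : ℝ => Real.exp (x ^ 2 / 2)) (w * Real.exp (w ^ 2 / 2)) w := by
  have h0 : HasDerivAt (fun u : ℝ => u ^ 2) (2 * w) w := by simpa using hasDerivAt_pow 2 w
  have h1 : HasDerivAt (fun u : ℝ => u ^ 2 / 2) w w := by
    have := h0.div_const 2
    exact this.congr_deriv (by ring)
  have := h1.exp
  exact this.congr_deriv (by ring)

lemma hasDerivAt_gm (s w : ℝ) : HasDerivAt (gm s) (w * gm s w + (1 - Phi s)) w := by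
  have h := ((hasDerivAt_E w).mul (hasDerivAt_gint w)).const_mul (1 - Phi s)
  have hgoal : HasDerivAt (fun w => (1 - Phi s) * (Real.exp (w ^ 2 / 2) * gint w))
      (w * gm s w + (1 - Phi s)) w := by
    refine h.congr_deriv ?_
    rw [gm]
    linear_combination (1 - Phi s) * exp_mul_exp_neg w
  exact hgoal

lemma hasDerivAt_gintJ (w : ℝ) : HasDerivAt gintJ (-Real.exp (-w ^ 2 / 2)) w := by
  have hfun : gintJ = fun x => Real.sqrt (2 * Real.pi) - gint x :=
    funext fun x => by have := gint_add_gintJ x; linarith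
  rw [hfun]
  simpa using (hasDerivAt_gint w).const_sub (Real.sqrt (2 * Real.pi))

lemma hasDerivAt_gp (s w : ℝ) : HasDerivAt (gp s) (w * gp s w - Phi s) w := by
  have h := ((hasDerivAt_E w).mul (hasDerivAt_gintJ w)).const_mul (Phi s)
  have hgoal : HasDerivAt (fun w => Phi s * (Real.exp (w ^ 2 / 2) * gintJ w))
      (w * gp s w - Phi s) w := by
    refine h.congr_deriv ?_
    rw [gp]
    linear_combination -Phi s * exp_mul_exp_neg w
  exact hgoal

lemma cont_gm (s : ℝ) : Continuous (gm s) :=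
  continuous_iff_continuousAt.2 fun w => (hasDerivAt_gm s w).continuousAt

lemma cont_gp (s : ℝ) : Continuous (gp s) :=
  continuous_iff_continuousAt.2 fun w => (hasDerivAt_gp s w).continuousAt

lemma gm_nonneg (s w : ℝ) : 0 ≤ gm s w :=
  mul_nonneg (by linarith [Phi_le_one s])
    (mul_nonneg (Real.exp_nonneg _) (gint_nonneg w))

lemma gp_nonneg (s w : ℝ) : 0 ≤ gp s w :=
  mul_nonneg (Phi_nonneg s) (mul_nonneg (Real.exp_nonneg _) (gintJ_nonneg w))

lemma gm_le {s w : ℝ} (hw : w ≤ s) : gm s w ≤ Real.sqrt (2 * Real.pi) / 2 := by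
  rcases le_or_gt w 0 with h0 | h0
  · have hP := P_half h0
    have hle : gm s w ≤ Real.exp (w ^ 2 / 2) * gint w := by
      rw [gm]
      exact mul_le_of_le_one_left (mul_nonneg (Real.exp_nonneg _) (gint_nonneg w))
        (by linarith [Phi_nonneg s])
    exact hle.trans hP
  · have hJ : gintJ s ≤ gintJ w := gintJ_anti hw
    have hc : (Real.exp (w ^ 2 / 2) * gintJ s) * gint w
        ≤ (Real.exp (w ^ 2 / 2) * gintJ w) * Real.sqrt (2 * Real.pi) :=
      mul_le_mul (mul_le_mul_of_nonneg_left hJ (Real.exp_nonneg _)) (gint_le w)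
        (gint_nonneg w) (mul_nonneg (Real.exp_nonneg _) (gintJ_nonneg w))
    have key : gm s w * Real.sqrt (2 * Real.pi)
        ≤ (Real.exp (w ^ 2 / 2) * gintJ w) * Real.sqrt (2 * Real.pi) := by
      calc gm s w * Real.sqrt (2 * Real.pi)
          = (Real.exp (w ^ 2 / 2) * gintJ s) * gint w := by
            rw [gm, ← one_sub_Phi_sqrt]; ring
        _ ≤ _ := hc
    exact (le_of_mul_le_mul_right key sqrt_two_pi_pos).trans (Q_half h0.le)

lemma gm_mul {s w : ℝ} (hw : w ≤ s) : |w| * gm s w ≤ 1 := by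
  rcases le_or_gt w 0 with h0 | h0
  · rw [abs_of_nonpos h0]
    have hP := P_mul h0
    have hle : -w * gm s w ≤ -w * (Real.exp (w ^ 2 / 2) * gint w) := by
      rw [gm, show -w * ((1 - Phi s) * (Real.exp (w ^ 2 / 2) * gint w))
          = (1 - Phi s) * (-w * (Real.exp (w ^ 2 / 2) * gint w)) by ring]
      exact mul_le_of_le_one_left
        (mul_nonneg (neg_nonneg.2 h0) (mul_nonneg (Real.exp_nonneg _) (gint_nonneg w)))
        (by linarith [Phi_nonneg s])
    exact hle.trans hP
  · rw [abs_of_pos h0]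
    have hJ : gintJ s ≤ gintJ w := gintJ_anti hw
    have hc : (Real.exp (w ^ 2 / 2) * gintJ s) * gint w
        ≤ (Real.exp (w ^ 2 / 2) * gintJ w) * Real.sqrt (2 * Real.pi) :=
      mul_le_mul (mul_le_mul_of_nonneg_left hJ (Real.exp_nonneg _)) (gint_le w)
        (gint_nonneg w) (mul_nonneg (Real.exp_nonneg _) (gintJ_nonneg w))
    have key : (w * gm s w) * Real.sqrt (2 * Real.pi)
        ≤ (w * (Real.exp (w ^ 2 / 2) * gintJ w)) * Real.sqrt (2 * Real.pi) := by
      calc (w * gm s w) * Real.sqrt (2 * Real.pi)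
          = w * ((Real.exp (w ^ 2 / 2) * gintJ s) * gint w) := by
            rw [gm, ← one_sub_Phi_sqrt]; ring
        _ ≤ w * ((Real.exp (w ^ 2 / 2) * gintJ w) * Real.sqrt (2 * Real.pi)) :=
            mul_le_mul_of_nonneg_left hc h0.le
        _ = _ := by ring
    exact (le_of_mul_le_mul_right key sqrt_two_pi_pos).trans (Q_mul h0.le)

lemma gp_le {s w : ℝ} (hw : s ≤ w) : gp s w ≤ Real.sqrt (2 * Real.pi) / 2 := by
  rcases le_or_gt 0 w with h0 | h0
  · have hQ := Q_half h0
    have hle : gp s w ≤ Real.exp (w ^ 2 / 2) * gintJ w := by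
      rw [gp]
      exact mul_le_of_le_one_left (mul_nonneg (Real.exp_nonneg _) (gintJ_nonneg w))
        (Phi_le_one s)
    exact hle.trans hQ
  · have hG : gint s ≤ gint w := gint_mono hw
    have hJle : gintJ w ≤ Real.sqrt (2 * Real.pi) := by
      have := gint_add_gintJ w
      have := gint_nonneg w
      linarith
    have hc : (Real.exp (w ^ 2 / 2) * gint s) * gintJ w
        ≤ (Real.exp (w ^ 2 / 2) * gint w) * Real.sqrt (2 * Real.pi) :=
      mul_le_mul (mul_le_mul_of_nonneg_left hG (Real.exp_nonneg _)) hJle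
        (gintJ_nonneg w) (mul_nonneg (Real.exp_nonneg _) (gint_nonneg w))
    have key : gp s w * Real.sqrt (2 * Real.pi)
        ≤ (Real.exp (w ^ 2 / 2) * gint w) * Real.sqrt (2 * Real.pi) := by
      calc gp s w * Real.sqrt (2 * Real.pi)
          = (Real.exp (w ^ 2 / 2) * gint s) * gintJ w := by
            rw [gp, ← Phi_sqrt]; ring
        _ ≤ _ := hc
    exact (le_of_mul_le_mul_right key sqrt_two_pi_pos).trans (P_half h0.le)

lemma gp_mul {s w : ℝ} (hw : s ≤ w) : |w| * gp s w ≤ 1 := by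
  rcases le_or_gt 0 w with h0 | h0
  · rw [abs_of_nonneg h0]
    have hQ := Q_mul h0
    have hle : w * gp s w ≤ w * (Real.exp (w ^ 2 / 2) * gintJ w) := by
      rw [gp, show w * (Phi s * (Real.exp (w ^ 2 / 2) * gintJ w))
          = Phi s * (w * (Real.exp (w ^ 2 / 2) * gintJ w)) by ring]
      exact mul_le_of_le_one_left
        (mul_nonneg h0 (mul_nonneg (Real.exp_nonneg _) (gintJ_nonneg w)))
        (Phi_le_one s)
    exact hle.trans hQ
  · rw [abs_of_neg h0]
    have hG : gint s ≤ gint w := gint_mono hw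
    have hJle : gintJ w ≤ Real.sqrt (2 * Real.pi) := by
      have := gint_add_gintJ w
      have := gint_nonneg w
      linarith
    have hc : (Real.exp (w ^ 2 / 2) * gint s) * gintJ w
        ≤ (Real.exp (w ^ 2 / 2) * gint w) * Real.sqrt (2 * Real.pi) :=
      mul_le_mul (mul_le_mul_of_nonneg_left hG (Real.exp_nonneg _)) hJle
        (gintJ_nonneg w) (mul_nonneg (Real.exp_nonneg _) (gint_nonneg w))
    have key : (-w * gp s w) * Real.sqrt (2 * Real.pi)
        ≤ (-w * (Real.exp (w ^ 2 / 2) * gint w)) * Real.sqrt (2 * Real.pi) := by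
      calc (-w * gp s w) * Real.sqrt (2 * Real.pi)
          = -w * ((Real.exp (w ^ 2 / 2) * gint s) * gintJ w) := by
            rw [gp, ← Phi_sqrt]; ring
        _ ≤ -w * ((Real.exp (w ^ 2 / 2) * gint w) * Real.sqrt (2 * Real.pi)) :=
            mul_le_mul_of_nonneg_left hc (by linarith)
        _ = _ := by ring
    exact (le_of_mul_le_mul_right key sqrt_two_pi_pos).trans (P_mul h0.le)


lemma step_gm (s : ℝ) {x y : ℝ} (hxy : x ≤ y) (hys : y ≤ s) :
    |y * gm s y - x * gm s x|
      ≤ (y - x) * (Real.sqrt (2 * Real.pi) / 2) + |x| * (2 * (y - x)) := by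
  have hlip : ‖gm s y - gm s x‖ ≤ 2 * ‖y - x‖ := by
    refine (convex_Icc x y).norm_image_sub_le_of_norm_hasDerivWithin_le
      (f' := fun z => z * gm s z + (1 - Phi s))
      (fun z _ => (hasDerivAt_gm s z).hasDerivWithinAt)
      (fun z hz => ?_) (Set.left_mem_Icc.2 hxy) (Set.right_mem_Icc.2 hxy)
    have hz_s : z ≤ s := le_trans hz.2 hys
    have h1 : |z| * gm s z ≤ 1 := gm_mul hz_s
    have h2 : |1 - Phi s| ≤ 1 :=
      abs_le.2 ⟨by linarith [Phi_le_one s], by linarith [Phi_nonneg s]⟩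
    calc ‖z * gm s z + (1 - Phi s)‖ = |z * gm s z + (1 - Phi s)| := Real.norm_eq_abs _
      _ ≤ |z * gm s z| + |1 - Phi s| := abs_add_le _ _
      _ ≤ 2 := by rw [abs_mul, abs_of_nonneg (gm_nonneg s z)]; linarith
  rw [Real.norm_eq_abs, Real.norm_eq_abs, abs_of_nonneg (sub_nonneg.2 hxy)] at hlip
  have hdecomp : y * gm s y - x * gm s x = (y - x) * gm s y + x * (gm s y - gm s x) := by ring
  rw [hdecomp]
  refine (abs_add_le _ _).trans ?_
  rw [abs_mul, abs_mul, abs_of_nonneg (sub_nonneg.2 hxy), abs_of_nonneg (gm_nonneg s y)]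
  have f1 : (y - x) * gm s y ≤ (y - x) * (Real.sqrt (2 * Real.pi) / 2) :=
    mul_le_mul_of_nonneg_left (gm_le hys) (sub_nonneg.2 hxy)
  have f2 : |x| * |gm s y - gm s x| ≤ |x| * (2 * (y - x)) :=
    mul_le_mul_of_nonneg_left hlip (abs_nonneg x)
  linarith

lemma step_gp (s : ℝ) {x y : ℝ} (hsx : s ≤ x) (hxy : x ≤ y) :
    |y * gp s y - x * gp s x|
      ≤ (y - x) * (Real.sqrt (2 * Real.pi) / 2) + |x| * (2 * (y - x)) := by
  have hlip : ‖gp s y - gp s x‖ ≤ 2 * ‖y - x‖ := by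
    refine (convex_Icc x y).norm_image_sub_le_of_norm_hasDerivWithin_le
      (f' := fun z => z * gp s z - Phi s)
      (fun z _ => (hasDerivAt_gp s z).hasDerivWithinAt)
      (fun z hz => ?_) (Set.left_mem_Icc.2 hxy) (Set.right_mem_Icc.2 hxy)
    have hz_s : s ≤ z := le_trans hsx hz.1
    have h1 : |z| * gp s z ≤ 1 := gp_mul hz_s
    have h2 : |Phi s| ≤ 1 := abs_le.2 ⟨by linarith [Phi_nonneg s], Phi_le_one s⟩
    calc ‖z * gp s z - Phi s‖ = |z * gp s z - Phi s| := Real.norm_eq_abs _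
      _ ≤ |z * gp s z| + |Phi s| := abs_sub _ _
      _ ≤ 2 := by rw [abs_mul, abs_of_nonneg (gp_nonneg s z)]; linarith
  rw [Real.norm_eq_abs, Real.norm_eq_abs, abs_of_nonneg (sub_nonneg.2 hxy)] at hlip
  have hdecomp : y * gp s y - x * gp s x = (y - x) * gp s y + x * (gp s y - gp s x) := by ring
  rw [hdecomp]
  refine (abs_add_le _ _).trans ?_
  rw [abs_mul, abs_mul, abs_of_nonneg (sub_nonneg.2 hxy), abs_of_nonneg (gp_nonneg s y)]
  have f1 : (y - x) * gp s y ≤ (y - x) * (Real.sqrt (2 * Real.pi) / 2) :=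
    mul_le_mul_of_nonneg_left (gp_le (hsx.trans hxy)) (sub_nonneg.2 hxy)
  have f2 : |x| * |gp s y - gp s x| ≤ |x| * (2 * (y - x)) :=
    mul_le_mul_of_nonneg_left hlip (abs_nonneg x)
  linarith

end SteinAux

open SteinAux in
/-- Taylor-type estimate for the Stein solution across the singularity, case `a ≤ s < b`. -/
theorem steinG_taylor_cross_up (s a b : ℝ) (ha : a ≤ s) (hb : s < b) :
    |steinG s b - steinG s a - (a * steinG s a + 1 - Phi s) * (b - a) + (b - s)| ≤
      2 * (Real.sqrt (2 * Real.pi) / 4 + |a| + (b - a)) * (b - a) ^ 2 := by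
  have hab : a ≤ b := ha.trans hb.le
  have hsb : s ≤ b := hb.le
  set C := Real.sqrt (2 * Real.pi) / 2 + 2 * (|a| + (b - a)) with hC
  clear_value C
  have hC0 : 0 ≤ C := by
    rw [hC]
    have := Real.sqrt_nonneg (2 * Real.pi)
    have := abs_nonneg a
    linarith
  have hs_abs : |s| ≤ |a| + (b - a) := by
    rw [abs_le]
    constructor
    · have := neg_abs_le a
      linarith
    · have := le_abs_self a
      linarith
  -- continuity
  have cgm : Continuous (fun w : ℝ => w * gm s w - a * gm s a) :=
    (continuous_id.mul (cont_gm s)).sub continuous_const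
  have cgp : Continuous (fun w : ℝ => w * gp s w - a * gm s a) :=
    (continuous_id.mul (cont_gp s)).sub continuous_const
  -- FTC on the two pieces
  have h1 : gm s s - gm s a = ∫ w in a..s, (w * gm s w + (1 - Phi s)) :=
    (intervalIntegral.integral_eq_sub_of_hasDerivAt
      (fun x _ => hasDerivAt_gm s x)
      (((continuous_id.mul (cont_gm s)).add continuous_const).intervalIntegrable a s)).symm
  have h2 : gp s b - gp s s = ∫ w in s..b, (w * gp s w - Phi s) :=
    (intervalIntegral.integral_eq_sub_of_hasDerivAt
      (fun x _ => hasDerivAt_gp s x)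
      (((continuous_id.mul (cont_gp s)).sub continuous_const).intervalIntegrable s b)).symm
  set A1 := ∫ w in a..s, (w * gm s w - a * gm s a) with hA1
  set A2 := ∫ w in s..b, (w * gp s w - a * gm s a) with hA2
  clear_value A1 A2
  have e1 : (∫ w in a..s, (w * gm s w + (1 - Phi s)))
      = A1 + (a * gm s a + (1 - Phi s)) * (s - a) := by
    have hfn : (fun w => w * gm s w + (1 - Phi s))
        = fun w => (w * gm s w - a * gm s a) + (a * gm s a + (1 - Phi s)) :=
      funext fun w => by ring
    rw [hfn, intervalIntegral.integral_add (cgm.intervalIntegrable a s)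
      intervalIntegrable_const, intervalIntegral.integral_const, hA1]
    simp only [smul_eq_mul]
    ring
  have e2 : (∫ w in s..b, (w * gp s w - Phi s))
      = A2 + (a * gm s a - Phi s) * (b - s) := by
    have hfn : (fun w => w * gp s w - Phi s)
        = fun w => (w * gp s w - a * gm s a) + (a * gm s a - Phi s) :=
      funext fun w => by ring
    rw [hfn, intervalIntegral.integral_add (cgp.intervalIntegrable s b)
      intervalIntegrable_const, intervalIntegral.integral_const, hA2]
    simp only [smul_eq_mul]
    ring
  rw [e1] at h1
  rw [e2] at h2
  have hgmgp := gm_eq_gp_at s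
  have hmain : steinG s b - steinG s a - (a * steinG s a + 1 - Phi s) * (b - a) + (b - s)
      = A1 + A2 := by
    rw [steinG_eq_right hsb, steinG_eq_left ha]
    linear_combination h1 + h2 - hgmgp
  -- pointwise bounds
  have bound1 : ∀ w ∈ Set.Icc a s, |w * gm s w - a * gm s a| ≤ C * (w - a) := by
    intro w hw
    have hstep := step_gm s hw.1 hw.2
    have f2 : |a| * (2 * (w - a)) ≤ (|a| + (b - a)) * (2 * (w - a)) := by
      have h0 : (0:ℝ) ≤ 2 * (w - a) := by linarith [hw.1]
      have : |a| ≤ |a| + (b - a) := by linarith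
      exact mul_le_mul_of_nonneg_right this h0
    rw [hC]
    nlinarith [hw.1]
  have bound2 : ∀ w ∈ Set.Icc s b, |w * gp s w - a * gm s a| ≤ C * (w - a) := by
    intro w hw
    have hstep1 := step_gp s le_rfl hw.1
    have hstep2 := step_gm s ha le_rfl
    have htri : |w * gp s w - a * gm s a|
        ≤ |w * gp s w - s * gp s s| + |s * gm s s - a * gm s a| := by
      have : w * gp s w - a * gm s a
          = (w * gp s w - s * gp s s) + (s * gp s s - a * gm s a) := by ring
      rw [this]
      refine (abs_add_le _ _).trans ?_
      rw [hgmgp]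
    have f1 : |s| * (2 * (w - s)) ≤ (|a| + (b - a)) * (2 * (w - s)) := by
      have h0 : (0:ℝ) ≤ 2 * (w - s) := by linarith [hw.1]
      exact mul_le_mul_of_nonneg_right hs_abs h0
    have f2 : |a| * (2 * (s - a)) ≤ (|a| + (b - a)) * (2 * (s - a)) := by
      have h0 : (0:ℝ) ≤ 2 * (s - a) := by linarith
      have : |a| ≤ |a| + (b - a) := by linarith
      exact mul_le_mul_of_nonneg_right this h0
    rw [hC]
    nlinarith [hw.1]
  -- integral bounds
  have ib1 : |A1| ≤ C * ((s ^ 2 - a ^ 2) / 2 - (s - a) * a) := by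
    have hn := intervalIntegral.norm_integral_le_integral_norm
      (f := fun w => w * gm s w - a * gm s a) (μ := volume) ha
    have hmono : (∫ w in a..s, ‖w * gm s w - a * gm s a‖)
        ≤ ∫ w in a..s, C * (w - a) :=
      intervalIntegral.integral_mono_on ha (cgm.norm.intervalIntegrable a s)
        ((continuous_const.mul (continuous_id.sub continuous_const)).intervalIntegrable a s)
        (fun w hw => by rw [Real.norm_eq_abs]; exact bound1 w hw)
    have hval : (∫ w in a..s, C * (w - a)) = C * ((s ^ 2 - a ^ 2) / 2 - (s - a) * a) := by
      rw [intervalIntegral.integral_const_mul]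
      congr 1
      rw [intervalIntegral.integral_sub (continuous_id'.intervalIntegrable a s)
        intervalIntegrable_const, integral_id, intervalIntegral.integral_const]
      simp [smul_eq_mul]
    rw [Real.norm_eq_abs] at hn
    rw [hA1]
    calc |∫ w in a..s, (w * gm s w - a * gm s a)| ≤ _ := hn
      _ ≤ ∫ w in a..s, C * (w - a) := hmono
      _ = _ := hval
  have ib2 : |A2| ≤ C * ((b ^ 2 - s ^ 2) / 2 - (b - s) * a) := by
    have hn := intervalIntegral.norm_integral_le_integral_norm
      (f := fun w => w * gp s w - a * gm s a) (μ := volume) hsb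
    have hmono : (∫ w in s..b, ‖w * gp s w - a * gm s a‖)
        ≤ ∫ w in s..b, C * (w - a) :=
      intervalIntegral.integral_mono_on hsb (cgp.norm.intervalIntegrable s b)
        ((continuous_const.mul (continuous_id.sub continuous_const)).intervalIntegrable s b)
        (fun w hw => by rw [Real.norm_eq_abs]; exact bound2 w hw)
    have hval : (∫ w in s..b, C * (w - a)) = C * ((b ^ 2 - s ^ 2) / 2 - (b - s) * a) := by
      rw [intervalIntegral.integral_const_mul]
      congr 1
      rw [intervalIntegral.integral_sub (continuous_id'.intervalIntegrable s b)
        intervalIntegrable_const, integral_id, intervalIntegral.integral_const]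
      simp [smul_eq_mul]
    rw [Real.norm_eq_abs] at hn
    rw [hA2]
    calc |∫ w in s..b, (w * gp s w - a * gm s a)| ≤ _ := hn
      _ ≤ ∫ w in s..b, C * (w - a) := hmono
      _ = _ := hval
  -- combine
  have hV : ((s ^ 2 - a ^ 2) / 2 - (s - a) * a) + ((b ^ 2 - s ^ 2) / 2 - (b - s) * a)
      ≤ (b - a) ^ 2 := by
    nlinarith [mul_nonneg (sub_nonneg.2 ha) (sub_nonneg.2 hsb)]
  have hfin : C * (((s ^ 2 - a ^ 2) / 2 - (s - a) * a) + ((b ^ 2 - s ^ 2) / 2 - (b - s) * a))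
      ≤ C * (b - a) ^ 2 := mul_le_mul_of_nonneg_left hV hC0
  have hRHS : 2 * (Real.sqrt (2 * Real.pi) / 4 + |a| + (b - a)) * (b - a) ^ 2
      = C * (b - a) ^ 2 := by rw [hC]; ring
  rw [hmain, hRHS]
  calc |A1 + A2| ≤ |A1| + |A2| := abs_add_le _ _
    _ ≤ C * (b - a) ^ 2 := by linarith
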